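/- Let K be a compact linearly ordered topological space and let G : K → ℝ be right-continuous and of bounded variation. Set G_1 = T_G (the variation function T_G(x) = |G(0_K)| + Var(G|_{[0_K,x]})) and G_2 = T_G − G. Then G_1 and G_2 are both nondecreasing right-continuous functions and G = G_1 − G_2. -/

import Mathlib

/-- The set of division sums of `G` over `[⊥, x]`. -/
def divisionSums {K : Type*} [LinearOrder K] [OrderBot K] (G : K → ℝ) (x : K) :
    Set ℝ :=
  {v | ∃ (n : ℕ) (s : Fin (n + 1) → K), Monotone s ∧ s 0 = ⊥ ∧
    s (Fin.last n) = x ∧ v = ∑ i : Fin n, |G (s i.succ) - G (s i.castSucc)|}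

open Set Filter Topology

section Aux

variable {K : Type*} [LinearOrder K] [OrderBot K]

/-- Every division sum is dominated by the extended variation on `[⊥, x]`. -/
lemma ofReal_le_eVar_of_mem (G : K → ℝ) (x : K) {v : ℝ} (hv : v ∈ divisionSums G x) :
    ENNReal.ofReal v ≤ eVariationOn G (Set.Icc ⊥ x) := by
  obtain ⟨n, s, hmono, hs0, hsl, rfl⟩ := hv
  set u : ℕ → K := fun i => s ⟨min i n, Nat.lt_succ_of_le (min_le_right _ _)⟩ with hu
  have humono : Monotone u := by
    intro i j hij
    exact hmono (by simp only [Fin.mk_le_mk]; omega)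
  have humem : ∀ i, u i ∈ Set.Icc (⊥ : K) x := by
    intro i
    exact ⟨bot_le, hsl ▸ hmono (Fin.le_last _)⟩
  have hterm : ∀ i : Fin n, |G (s i.succ) - G (s i.castSucc)|
      = |G (u (i.val + 1)) - G (u i.val)| := by
    intro i
    have h1 : u (i.val + 1) = s i.succ := by
      simp only [hu]
      congr 1
      exact Fin.ext (by simp [Nat.min_eq_left (Nat.succ_le_of_lt i.isLt)])
    have h2 : u i.val = s i.castSucc := by
      simp only [hu]
      congr 1
      exact Fin.ext (by simp [Nat.min_eq_left (le_of_lt i.isLt)])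
    rw [h1, h2]
  have hsum : (∑ i : Fin n, |G (s i.succ) - G (s i.castSucc)|)
      = ∑ i ∈ Finset.range n, |G (u (i + 1)) - G (u i)| := by
    rw [Finset.sum_congr rfl fun i _ => hterm i]
    exact Fin.sum_univ_eq_sum_range (fun m => |G (u (m + 1)) - G (u m)|) n
  rw [hsum, ENNReal.ofReal_sum_of_nonneg (fun i _ => abs_nonneg _)]
  have : ∀ i ∈ Finset.range n, ENNReal.ofReal |G (u (i + 1)) - G (u i)|
      = edist (G (u (i + 1))) (G (u i)) := by
    intro i _
    rw [edist_dist, Real.dist_eq]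
  rw [Finset.sum_congr rfl this]
  exact eVariationOn.sum_le (f := G) (n := n) humono humem

/-- The extended variation on `[⊥, x]` is dominated by any upper bound of the
division sums. -/
lemma eVar_le_of_upperBound (G : K → ℝ) (x : K) {m : ℝ}
    (hub : m ∈ upperBounds (divisionSums G x)) :
    eVariationOn G (Set.Icc ⊥ x) ≤ ENNReal.ofReal m := by
  delta eVariationOn
  refine iSup_le ?_
  rintro ⟨n, u, hu, hus⟩
  dsimp only
  set w : ℕ → K := fun j => if j = 0 then ⊥ else if j ≤ n + 1 then u (j - 1) else x with hw
  have hw0 : w 0 = ⊥ := by simp [hw]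
  have hwmid : ∀ i, i ≤ n → w (i + 1) = u i := by
    intro i hi
    simp only [hw]
    rw [if_neg (by omega), if_pos (by omega)]
    congr 1
  have hwtop : ∀ j, n + 2 ≤ j → w j = x := by
    intro j hj
    simp only [hw]
    rw [if_neg (by omega), if_neg (by omega)]
  have hwx : ∀ j, w j ≤ x := by
    intro j
    simp only [hw]
    split_ifs with h1 h2
    · exact bot_le
    · exact (hus _).2
    · exact le_rfl
  have hwmono : Monotone w := by
    intro i j hij
    rcases Nat.eq_zero_or_pos i with hi | hi
    · rw [hi, hw0]; exact bot_le
    by_cases hjn : j ≤ n + 1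
    · have hin : i ≤ n + 1 := le_trans hij hjn
      simp only [hw]
      rw [if_neg (by omega), if_pos hin, if_neg (by omega), if_pos hjn]
      exact hu (by omega)
    · rw [hwtop j (by omega)]
      exact hwx i
  set D := ∑ i : Fin (n + 2), |G (w (i.val + 1)) - G (w i.val)| with hD
  have hDmem : D ∈ divisionSums G x := by
    refine ⟨n + 2, fun i => w i.val, ?_, ?_, ?_, ?_⟩
    · intro i j hij; exact hwmono hij
    · exact hw0
    · exact hwtop _ (by simp [Fin.last])
    · rfl
  have hDle : D ≤ m := hub hDmem
  have hDsum : D = ∑ i ∈ Finset.range (n + 2), |G (w (i + 1)) - G (w i)| :=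
    Fin.sum_univ_eq_sum_range (fun m => |G (w (m + 1)) - G (w m)|) (n + 2)
  have hsum_le : (∑ i ∈ Finset.range n, |G (u (i + 1)) - G (u i)|) ≤ D := by
    rw [hDsum, Finset.sum_range_succ' (fun i => |G (w (i + 1)) - G (w i)|) (n + 1),
      Finset.sum_range_succ]
    have hcongr : ∀ i ∈ Finset.range n,
        |G (u (i + 1)) - G (u i)| = |G (w (i + 1 + 1)) - G (w (i + 1))| := by
      intro i hi
      rw [Finset.mem_range] at hi
      rw [hwmid (i + 1) (by omega), hwmid i (by omega)]
    rw [Finset.sum_congr rfl hcongr]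
    have h1 : (0:ℝ) ≤ |G (w (n + 1 + 1)) - G (w (n + 1))| := abs_nonneg _
    have h2 : (0:ℝ) ≤ |G (w (0 + 1)) - G (w 0)| := abs_nonneg _
    linarith
  calc (∑ i ∈ Finset.range n, edist (G (u (i + 1))) (G (u i)))
      = ENNReal.ofReal (∑ i ∈ Finset.range n, |G (u (i + 1)) - G (u i)|) := by
        rw [ENNReal.ofReal_sum_of_nonneg (fun i _ => abs_nonneg _)]
        exact Finset.sum_congr rfl fun i _ => by rw [edist_dist, Real.dist_eq]
    _ ≤ ENNReal.ofReal m := ENNReal.ofReal_le_ofReal (le_trans hsum_le hDle)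

end Aux

/-- Jordan decomposition on a compact line: if `G : K → ℝ` is right-continuous
and of bounded variation with variation function `T`, then `G₁ = T` and
`G₂ = T − G` are nondecreasing right-continuous functions with `G = G₁ − G₂`. -/
theorem stmt10 {K : Type*} [LinearOrder K] [TopologicalSpace K] [OrderTopology K]
    [CompactSpace K] [Nonempty K] [OrderBot K] [OrderTop K]
    (G : K → ℝ)
    (hG_rc : ∀ x : K, ContinuousWithinAt G (Set.Ici x) x)
    (hBV : BddAbove (divisionSums G ⊤))
    (T : K → ℝ)
    (hT : ∀ x : K, IsLUB (divisionSums G x) (T x - |G ⊥|)) :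
    Monotone T ∧ (∀ x : K, ContinuousWithinAt T (Set.Ici x) x) ∧
    Monotone (fun x => T x - G x) ∧
    (∀ x : K, ContinuousWithinAt (fun x => T x - G x) (Set.Ici x) x) ∧
    (∀ x : K, G x = T x - (T x - G x)) := by
  classical
  set c := |G ⊥| with hc
  -- `|G x - G ⊥|` is a division sum, so `T x - c ≥ 0`.
  have h0 : ∀ x : K, 0 ≤ T x - c := by
    intro x
    have hmem : |G x - G ⊥| ∈ divisionSums G x := by
      refine ⟨1, fun i => if i = 0 then ⊥ else x, ?_, ?_, ?_, ?_⟩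
      · intro i j hij
        by_cases hi : i = 0
        · simp [hi]
        · have hj : j ≠ 0 := by
            intro h; apply hi
            exact le_antisymm (h ▸ hij) (Fin.zero_le i)
          simp [hi, hj]
      · simp
      · have : (Fin.last 1 : Fin 2) ≠ 0 := by decide
        simp [this]
      · rw [Fin.sum_univ_one]
        have h1 : ((0 : Fin 1).succ : Fin 2) ≠ 0 := by decide
        have h2 : ((0 : Fin 1).castSucc : Fin 2) = 0 := by decide
        simp [h1, h2]
    exact le_trans (abs_nonneg _) ((hT x).1 hmem)
  -- Key identity: the extended variation equals `ofReal (T x - c)`.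
  have hkey : ∀ x : K, eVariationOn G (Set.Icc ⊥ x) = ENNReal.ofReal (T x - c) := by
    intro x
    refine le_antisymm (eVar_le_of_upperBound G x (hT x).1) ?_
    have hne : eVariationOn G (Set.Icc ⊥ x) ≠ ⊤ :=
      ne_top_of_le_ne_top ENNReal.ofReal_ne_top (eVar_le_of_upperBound G x (hT x).1)
    have hub : (eVariationOn G (Set.Icc ⊥ x)).toReal ∈ upperBounds (divisionSums G x) := by
      intro v hv
      have hv0 : 0 ≤ v := by
        obtain ⟨n, s, _, _, _, rfl⟩ := hv
        exact Finset.sum_nonneg fun i _ => abs_nonneg _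
      have := ofReal_le_eVar_of_mem G x hv
      calc v = (ENNReal.ofReal v).toReal := by rw [ENNReal.toReal_ofReal hv0]
        _ ≤ _ := ENNReal.toReal_mono hne this
    have := (hT x).2 hub
    calc ENNReal.ofReal (T x - c) ≤ ENNReal.ofReal (eVariationOn G (Set.Icc ⊥ x)).toReal :=
          ENNReal.ofReal_le_ofReal this
      _ = _ := ENNReal.ofReal_toReal hne
  -- Monotonicity of `T`.
  have hmonoT : Monotone T := by
    intro a b hab
    have h := eVariationOn.mono G (Set.Icc_subset_Icc_right hab :
      Set.Icc (⊥:K) a ⊆ Set.Icc ⊥ b)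
    rw [hkey a, hkey b] at h
    have := (ENNReal.ofReal_le_ofReal_iff (h0 b)).1 h
    linarith
  -- Variation increments.
  have hincr : ∀ a b : K, a ≤ b → eVariationOn G (Set.Icc a b) = ENNReal.ofReal (T b - T a) := by
    intro a b hab
    have h := eVariationOn.Icc_add_Icc G (s := (Set.univ : Set K)) bot_le hab (Set.mem_univ a)
    simp only [Set.univ_inter] at h
    rw [hkey a, hkey b] at h
    have h2 : ENNReal.ofReal (T a - c) + ENNReal.ofReal (T b - T a)
        = ENNReal.ofReal (T b - c) := by
      rw [← ENNReal.ofReal_add (h0 a) (sub_nonneg.2 (hmonoT hab))]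
      ring_nf
    exact (ENNReal.add_right_inj ENNReal.ofReal_ne_top).1 (h.trans h2.symm)
  -- Monotonicity of `T - G`.
  have hmono2 : Monotone (fun x => T x - G x) := by
    intro a b hab
    have h1 := eVariationOn.edist_le G (Set.left_mem_Icc.2 hab) (Set.right_mem_Icc.2 hab)
    rw [hincr a b hab, edist_dist, Real.dist_eq] at h1
    have h2 : |G a - G b| ≤ T b - T a :=
      (ENNReal.ofReal_le_ofReal_iff (sub_nonneg.2 (hmonoT hab))).1 h1
    have h3 : G b - G a ≤ |G a - G b| := by
      rw [abs_sub_comm]; exact le_abs_self _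
    simp only
    linarith
  -- Right continuity of `T`.
  have hTrc : ∀ x : K, ContinuousWithinAt T (Set.Ici x) x := by
    intro x
    rw [← Set.Ioi_insert, continuousWithinAt_insert_self]
    by_cases hbot : 𝓝[>] x = ⊥
    · unfold ContinuousWithinAt
      rw [hbot]
      exact tendsto_bot
    haveI : (𝓝[>] x).NeBot := ⟨hbot⟩
    have hne : (Set.Ioi x).Nonempty :=
      Filter.nonempty_of_mem (self_mem_nhdsWithin (a := x) (s := Set.Ioi x))
    have hne' : ∃ b, x < b := ⟨hne.choose, hne.choose_spec⟩
    have himne : (T '' Set.Ioi x).Nonempty := hne.image T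
    have hbdd : BddBelow (T '' Set.Ioi x) := by
      refine ⟨T x, ?_⟩
      rintro _ ⟨z, hz, rfl⟩
      exact hmonoT hz.le
    set M := sInf (T '' Set.Ioi x) with hM
    have htend : Tendsto T (𝓝[>] x) (𝓝 M) := hmonoT.tendsto_nhdsGT x
    have hxM : T x ≤ M := by
      refine le_csInf himne ?_
      rintro _ ⟨z, hz, rfl⟩
      exact hmonoT hz.le
    have hMle : ∀ z, x < z → M ≤ T z := fun z hz => csInf_le hbdd ⟨z, hz, rfl⟩
    rcases eq_or_lt_of_le hxM with heq | hlt
    · rwa [← heq] at htend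
    exfalso
    set L := M - T x with hL
    have hL0 : 0 < L := sub_pos.mpr hlt
    -- a right neighborhood where `G` stays close to `G x`
    have hGev : ∀ᶠ z in 𝓝[≥] x, |G z - G x| < L / 4 := by
      have := Metric.tendsto_nhds.mp (hG_rc x) (L / 4) (by positivity)
      filter_upwards [this] with z hz
      rwa [Real.dist_eq] at hz
    have hGev' : ∀ᶠ z in 𝓝[>] x, |G z - G x| < L / 4 :=
      hGev.filter_mono (nhdsWithin_mono x Set.Ioi_subset_Ici_self)
    obtain ⟨u₀, hu₀x, hu₀⟩ := (nhdsGT_basis_of_exists_gt hne').mem_iff.mp hGev'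
    -- a point with `T` close to `M`
    have hMlt : M < M + L / 4 := by linarith
    obtain ⟨_, ⟨y', hy', rfl⟩, hTy'⟩ := exists_lt_of_csInf_lt himne hMlt
    have h1 : ∀ᶠ z in 𝓝[>] x, z < u₀ :=
      mem_nhdsWithin_of_mem_nhds (Iio_mem_nhds hu₀x)
    have h2 : ∀ᶠ z in 𝓝[>] x, z ≤ y' := by
      filter_upwards [mem_nhdsWithin_of_mem_nhds (Iio_mem_nhds hy')] with z hz
      exact le_of_lt hz
    have h3 : ∀ᶠ z in 𝓝[>] x, x < z := self_mem_nhdsWithin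
    obtain ⟨y, hyu, hyy', hxy⟩ := (h1.and (h2.and h3)).exists
    have hTy : T y < M + L / 4 := lt_of_le_of_lt (hmonoT hyy') hTy'
    have hGsmall : ∀ z, x < z → z ≤ y → |G z - G x| < L / 4 := by
      intro z hz1 hz2
      exact hu₀ ⟨hz1, lt_of_le_of_lt hz2 hyu⟩
    -- the variation on `[x, y]` is at most `L / 2`
    have hvar_le : eVariationOn G (Set.Icc x y) ≤ ENNReal.ofReal (L / 2) := by
      delta eVariationOn
      refine iSup_le ?_
      rintro ⟨n, u, hu, hus⟩
      dsimp only
      by_cases hex : ∃ i, i ≤ n ∧ x < u i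
      · obtain ⟨k, hkspec, hkmin⟩ : ∃ k, (k ≤ n ∧ x < u k) ∧
            ∀ j, j < k → ¬(j ≤ n ∧ x < u j) :=
          ⟨Nat.find hex, Nat.find_spec hex, fun j hj => Nat.find_min hex hj⟩
        have hlt_k : ∀ j, j < k → u j = x := by
          intro j hj
          have hmin := hkmin j hj
          push_neg at hmin
          exact le_antisymm (hmin (le_trans (le_of_lt hj) hkspec.1)) (hus j).1
        have huky : u k ≤ y := (hus k).2
        -- tail bound
        have htail : (∑ i ∈ Finset.range (n - k),
            edist (G (u (k + i + 1))) (G (u (k + i)))) ≤ ENNReal.ofReal (L / 4) := by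
          have hvmono : Monotone (fun i => u (k + i)) := fun i j hij =>
            hu (Nat.add_le_add_left hij k)
          have hvmem : ∀ i, u (k + i) ∈ Set.Icc (u k) y := fun i =>
            ⟨hu (Nat.le_add_right k i), (hus (k + i)).2⟩
          have := eVariationOn.sum_le (f := G) (n := n - k) hvmono hvmem
          refine le_trans ?_ (le_trans this ?_)
          · exact le_of_eq (Finset.sum_congr rfl fun i _ => rfl)
          · rw [hincr (u k) y huky]
            refine ENNReal.ofReal_le_ofReal ?_
            have := hMle (u k) hkspec.2
            linarith
        -- head bound
        have hhead : (∑ i ∈ Finset.range k,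
            edist (G (u (i + 1))) (G (u i))) ≤ ENNReal.ofReal (L / 4) := by
          rcases Nat.eq_zero_or_pos k with hk0 | hk0
          · simp [hk0]
          obtain ⟨m, rfl⟩ : ∃ m, k = m + 1 := ⟨k - 1, by omega⟩
          rw [Finset.sum_range_succ]
          have hzero : (∑ i ∈ Finset.range m,
              edist (G (u (i + 1))) (G (u i))) = 0 := by
            refine Finset.sum_eq_zero fun i hi => ?_
            rw [Finset.mem_range] at hi
            rw [hlt_k (i + 1) (by omega), hlt_k i (by omega), edist_self]
          rw [hzero, zero_add, hlt_k m (Nat.lt_succ_self m), edist_dist, Real.dist_eq]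
          exact ENNReal.ofReal_le_ofReal
            (le_of_lt (hGsmall (u (m + 1)) hkspec.2 (hus (m + 1)).2))
        have hsplit : (∑ i ∈ Finset.range n, edist (G (u (i + 1))) (G (u i)))
            = (∑ i ∈ Finset.range k, edist (G (u (i + 1))) (G (u i)))
              + ∑ i ∈ Finset.range (n - k), edist (G (u (k + i + 1))) (G (u (k + i))) := by
          have hnk : k + (n - k) = n := by
            have := hkspec.1
            omega
          calc (∑ i ∈ Finset.range n, edist (G (u (i + 1))) (G (u i)))
              = ∑ i ∈ Finset.range (k + (n - k)), edist (G (u (i + 1))) (G (u i)) := by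
                rw [hnk]
            _ = _ := Finset.sum_range_add _ k (n - k)
        rw [hsplit]
        calc _ ≤ ENNReal.ofReal (L / 4) + ENNReal.ofReal (L / 4) := add_le_add hhead htail
          _ = ENNReal.ofReal (L / 4 + L / 4) := (ENNReal.ofReal_add (by positivity) (by positivity)).symm
          _ = ENNReal.ofReal (L / 2) := by ring_nf
      · push_neg at hex
        have hzero : (∑ i ∈ Finset.range n, edist (G (u (i + 1))) (G (u i))) = 0 := by
          refine Finset.sum_eq_zero fun i hi => ?_
          rw [Finset.mem_range] at hi
          have e1 : u (i + 1) = x := le_antisymm (hex (i + 1) (by omega)) (hus (i + 1)).1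
          have e2 : u i = x := le_antisymm (hex i (by omega)) (hus i).1
          rw [e1, e2, edist_self]
        rw [hzero]
        exact zero_le
    -- contradiction
    have hvar_eq : eVariationOn G (Set.Icc x y) = ENNReal.ofReal (T y - T x) :=
      hincr x y hxy.le
    rw [hvar_eq] at hvar_le
    have h4 : T y - T x ≤ L / 2 :=
      (ENNReal.ofReal_le_ofReal_iff (by positivity)).1 hvar_le
    have h5 : M ≤ T y := hMle y hxy
    linarith
  refine ⟨hmonoT, hTrc, hmono2, fun x => (hTrc x).sub (hG_rc x), fun x => by ring⟩
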